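/- Let λ : ℕ → ℝ with λ_n ≥ 0 for all n, let r > s > 0, let f, f_ε : ℕ → ℝ, and let ε > 0 satisfy: M² := Σ_n (1 + λ_n²)^r f_n² < ∞, Σ_n (f_n − f_{ε,n})² ≤ ε, and ε < M². Set h := ((M²/ε)^{1/r} − 1)^{−1/2} > 0 and define the truncated sequence g by g_n = f_{ε,n} if λ_n ≤ 1/h and g_n = 0 otherwise. Then Σ_n (1 + λ_n²)^s (f_n − g_n)² ≤ 4 · ε^{(r−s)/r} · M^{2s/r}. -/

import Mathlib

/-- Smoothing lemma in diagonal form: from `ℓ²`-noisy data `f_ε` at distance `√ε`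
from a smooth element `f ∈ H^r`, truncation at frequency `1/h` with
`h = ((M²/ε)^{1/r} - 1)^{-1/2}` produces `g ∈ H^s` with
`‖f - g‖_s² ≤ 4 ε^{(r-s)/r} M^{2s/r}`. -/
theorem stmt_13 (lam : ℕ → ℝ) (hlam : ∀ n, 0 ≤ lam n) (r s : ℝ)
    (hs : 0 < s) (hrs : s < r) (f feps : ℕ → ℝ) (ε M : ℝ) (hε : 0 < ε)
    (hsum : Summable fun n => (1 + lam n ^ 2) ^ r * f n ^ 2)
    (hM : M ^ 2 = ∑' n, (1 + lam n ^ 2) ^ r * f n ^ 2)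
    (hsum2 : Summable fun n => (f n - feps n) ^ 2)
    (hnoise : ∑' n, (f n - feps n) ^ 2 ≤ ε)
    (hεM : ε < M ^ 2)
    (h : ℝ) (hh : h = ((M ^ 2 / ε) ^ (1 / r) - 1) ^ (-(1 / 2 : ℝ)))
    (g : ℕ → ℝ) (hg : ∀ n, g n = if lam n ≤ 1 / h then feps n else 0) :
    (Summable fun n => (1 + lam n ^ 2) ^ s * (f n - g n) ^ 2) ∧
      ∑' n, (1 + lam n ^ 2) ^ s * (f n - g n) ^ 2 ≤
        4 * ε ^ ((r - s) / r) * (M ^ 2) ^ (s / r) := by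
  have hr : 0 < r := hs.trans hrs
  have hM2 : 0 < M ^ 2 := hε.trans hεM
  have hdiv : 1 < M ^ 2 / ε := (one_lt_div hε).2 hεM
  set A := (M ^ 2 / ε) ^ (1 / r) with hA
  have hA1 : 1 < A :=
    (Real.one_lt_rpow_iff_of_pos (by positivity)).2 (Or.inl ⟨hdiv, by positivity⟩)
  have hA0 : 0 < A := lt_trans one_pos hA1
  have hAm1 : 0 < A - 1 := by linarith
  have h1h : 1 / h = (A - 1) ^ ((1 : ℝ) / 2) := by
    rw [hh, Real.rpow_neg hAm1.le, one_div, inv_inv]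
  have h1h0 : 0 ≤ 1 / h := by rw [h1h]; positivity
  have hsq : 1 + (1 / h) ^ 2 = A := by
    rw [h1h, ← Real.rpow_natCast ((A - 1) ^ ((1 : ℝ) / 2)) 2,
      ← Real.rpow_mul hAm1.le]
    norm_num
  -- pointwise bound
  have hb : ∀ n, (1 + lam n ^ 2) ^ s * (f n - g n) ^ 2 ≤
      A ^ s * (f n - feps n) ^ 2 + A ^ (s - r) * ((1 + lam n ^ 2) ^ r * f n ^ 2) := by
    intro n
    have h1 : (0 : ℝ) < 1 + lam n ^ 2 := by positivity
    rw [hg n]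
    split_ifs with hc
    · have hle : 1 + lam n ^ 2 ≤ A := by
        have := pow_le_pow_left₀ (hlam n) hc 2
        linarith [hsq]
      have hpow : (1 + lam n ^ 2) ^ s ≤ A ^ s :=
        Real.rpow_le_rpow h1.le hle hs.le
      have : (1 + lam n ^ 2) ^ s * (f n - feps n) ^ 2 ≤ A ^ s * (f n - feps n) ^ 2 :=
        mul_le_mul_of_nonneg_right hpow (sq_nonneg _)
      have hnn : 0 ≤ A ^ (s - r) * ((1 + lam n ^ 2) ^ r * f n ^ 2) := by positivity
      linarith
    · push_neg at hc
      have hge : A ≤ 1 + lam n ^ 2 := by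
        have := pow_le_pow_left₀ h1h0 hc.le 2
        linarith [hsq]
      have hpow : (1 + lam n ^ 2) ^ (s - r) ≤ A ^ (s - r) :=
        Real.rpow_le_rpow_of_nonpos hA0 hge (by linarith)
      have hid : (1 + lam n ^ 2) ^ s = (1 + lam n ^ 2) ^ (s - r) * (1 + lam n ^ 2) ^ r := by
        rw [← Real.rpow_add h1]; ring_nf
      have hnn : 0 ≤ A ^ s * (f n - feps n) ^ 2 := by positivity
      have : (1 + lam n ^ 2) ^ s * (f n - 0) ^ 2 ≤
          A ^ (s - r) * ((1 + lam n ^ 2) ^ r * f n ^ 2) := by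
        rw [hid, sub_zero]
        have h2 : 0 ≤ (1 + lam n ^ 2) ^ r * f n ^ 2 := by positivity
        calc (1 + lam n ^ 2) ^ (s - r) * (1 + lam n ^ 2) ^ r * f n ^ 2
            = (1 + lam n ^ 2) ^ (s - r) * ((1 + lam n ^ 2) ^ r * f n ^ 2) := by ring
          _ ≤ A ^ (s - r) * ((1 + lam n ^ 2) ^ r * f n ^ 2) :=
            mul_le_mul_of_nonneg_right hpow h2
      linarith
  have hbsum : Summable fun n =>
      A ^ s * (f n - feps n) ^ 2 + A ^ (s - r) * ((1 + lam n ^ 2) ^ r * f n ^ 2) :=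
    (hsum2.mul_left _).add (hsum.mul_left _)
  have hS : Summable fun n => (1 + lam n ^ 2) ^ s * (f n - g n) ^ 2 := by
    refine Summable.of_nonneg_of_le (fun n => by positivity) hb hbsum
  refine ⟨hS, ?_⟩
  have hts : ∑' n, (1 + lam n ^ 2) ^ s * (f n - g n) ^ 2 ≤
      A ^ s * (∑' n, (f n - feps n) ^ 2) +
        A ^ (s - r) * (∑' n, (1 + lam n ^ 2) ^ r * f n ^ 2) := by
    calc ∑' n, (1 + lam n ^ 2) ^ s * (f n - g n) ^ 2
        ≤ ∑' n, (A ^ s * (f n - feps n) ^ 2 +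
            A ^ (s - r) * ((1 + lam n ^ 2) ^ r * f n ^ 2)) := Summable.tsum_le_tsum hb hS hbsum
      _ = _ := by
          rw [Summable.tsum_add (hsum2.mul_left _) (hsum.mul_left _), tsum_mul_left, tsum_mul_left]
  have hA0' : 0 ≤ A ^ (s - r) := by positivity
  have hAs : 0 ≤ A ^ s := by positivity
  have hbound : ∑' n, (1 + lam n ^ 2) ^ s * (f n - g n) ^ 2 ≤
      A ^ s * ε + A ^ (s - r) * M ^ 2 := by
    have h2 : A ^ s * (∑' n, (f n - feps n) ^ 2) ≤ A ^ s * ε :=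
      mul_le_mul_of_nonneg_left hnoise hAs
    rw [← hM] at hts
    linarith
  have key : ∀ t : ℝ, A ^ t = (M ^ 2) ^ (t / r) * ε ^ (-(t / r)) := by
    intro t
    rw [hA, ← Real.rpow_mul (by positivity), one_div, inv_mul_eq_div,
      Real.div_rpow hM2.le hε.le, Real.rpow_neg hε.le, div_eq_mul_inv]
  have eq1 : A ^ s * ε = ε ^ ((r - s) / r) * (M ^ 2) ^ (s / r) := by
    rw [key s]
    have : ε ^ (-(s / r)) * ε = ε ^ ((r - s) / r) := by
      nth_rewrite 2 [← Real.rpow_one ε]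
      rw [← Real.rpow_add hε]
      congr 1
      field_simp
      ring
    rw [mul_assoc, this]; ring
  have eq2 : A ^ (s - r) * M ^ 2 = ε ^ ((r - s) / r) * (M ^ 2) ^ (s / r) := by
    rw [key (s - r)]
    have e1 : -((s - r) / r) = (r - s) / r := by ring
    have e2 : (M ^ 2) ^ ((s - r) / r) * M ^ 2 = (M ^ 2) ^ (s / r) := by
      nth_rewrite 2 [← Real.rpow_one (M ^ 2)]
      rw [← Real.rpow_add hM2]
      congr 1
      field_simp
      ring
    calc (M ^ 2) ^ ((s - r) / r) * ε ^ (-((s - r) / r)) * M ^ 2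
        = (M ^ 2) ^ ((s - r) / r) * M ^ 2 * ε ^ (-((s - r) / r)) := by ring
      _ = (M ^ 2) ^ (s / r) * ε ^ ((r - s) / r) := by rw [e2, e1]
      _ = _ := by ring
  have hpos : 0 ≤ ε ^ ((r - s) / r) * (M ^ 2) ^ (s / r) := by positivity
  calc ∑' n, (1 + lam n ^ 2) ^ s * (f n - g n) ^ 2
      ≤ A ^ s * ε + A ^ (s - r) * M ^ 2 := hbound
    _ = 2 * (ε ^ ((r - s) / r) * (M ^ 2) ^ (s / r)) := by rw [eq1, eq2]; ring
    _ ≤ 4 * ε ^ ((r - s) / r) * (M ^ 2) ^ (s / r) := by nlinarith
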